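/- Let Λ, Λ' : M_{d_A}(ℂ) → M_{d_B}(ℂ) be channels with (1/2)‖Λ − Λ'‖_⋄ ≤ ε. Then 1 + 2R^τ(Λ'|Λ) ≥ (1 − 2ε)(1 + 2R^τ(Λ)). -/

import Mathlib

open Matrix
open scoped ComplexOrder

section Defs

variable {ιA ιB : Type*}

def ptranspose (M : Matrix (ιA × ιB) (ιA × ιB) ℂ) : Matrix (ιA × ιB) (ιA × ιB) ℂ :=
  Matrix.of fun p q => M (p.1, q.2) (q.1, p.2)

def IsPPT [Fintype ιA] [Fintype ιB] (M : Matrix (ιA × ιB) (ιA × ιB) ℂ) : Prop :=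
  M.PosSemidef ∧ (ptranspose M).PosSemidef

def IsState {ι : Type*} [Fintype ι] (ρ : Matrix ι ι ℂ) : Prop :=
  ρ.PosSemidef ∧ ρ.trace = 1

def idTensor (ιR : Type*) (Φ : Matrix ιA ιA ℂ →ₗ[ℂ] Matrix ιB ιB ℂ) :
    Matrix (ιR × ιA) (ιR × ιA) ℂ →ₗ[ℂ] Matrix (ιR × ιB) (ιR × ιB) ℂ where
  toFun M := Matrix.of fun p q => Φ (Matrix.of fun a b => M (p.1, a) (q.1, b)) p.2 q.2
  map_add' M N := by
    funext p q
    show Φ ((Matrix.of fun a b => M (p.1, a) (q.1, b)) + (Matrix.of fun a b => N (p.1, a) (q.1, b))) p.2 q.2 = _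
    rw [map_add]
    rfl
  map_smul' c M := by
    funext p q
    show Φ (c • (Matrix.of fun a b => M (p.1, a) (q.1, b))) p.2 q.2 = _
    rw [_root_.map_smul]
    rfl

noncomputable def opNorm {ι : Type*} [Fintype ι] [DecidableEq ι] (M : Matrix ι ι ℂ) : ℝ :=
  ‖Matrix.toEuclideanCLM (𝕜 := ℂ) (n := ι) M‖

noncomputable def traceNorm {ι : Type*} [Fintype ι] [DecidableEq ι] (M : Matrix ι ι ℂ) : ℝ :=
  (((Matrix.posSemidef_conjTranspose_mul_self M).1.eigenvectorUnitary.1 *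
    Matrix.diagonal (((↑) : ℝ → ℂ) ∘ (Real.sqrt ·) ∘ (Matrix.posSemidef_conjTranspose_mul_self M).1.eigenvalues) *
    (star (Matrix.posSemidef_conjTranspose_mul_self M).1.eigenvectorUnitary : Matrix ι ι ℂ)).trace).re

/-- The tempered negativity `N_τ(ρ|ω)`. -/
noncomputable def temperedNegRel [Fintype ιA] [Fintype ιB] [DecidableEq ιA] [DecidableEq ιB]
    (ρ ω : Matrix (ιA × ιB) (ιA × ιB) ℂ) : ℝ :=
  sSup {t : ℝ | ∃ X : Matrix (ιA × ιB) (ιA × ιB) ℂ, X.IsHermitian ∧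
    opNorm (ptranspose X) ≤ 1 ∧ opNorm X = ((X * ω).trace).re ∧ t = ((X * ρ).trace).re}

noncomputable def temperedNeg [Fintype ιA] [Fintype ιB] [DecidableEq ιA] [DecidableEq ιB]
    (ρ : Matrix (ιA × ιB) (ιA × ιB) ℂ) : ℝ :=
  temperedNegRel ρ ρ

/-- The tempered PPT robustness `R^τ(ρ|ω)`, via `1 + 2 R^τ(ρ|ω) = sup {...}`. -/
noncomputable def temperedRobRel [Fintype ιA] [Fintype ιB] [DecidableEq ιA] [DecidableEq ιB]
    (ρ ω : Matrix (ιA × ιB) (ιA × ιB) ℂ) : ℝ :=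
  (sSup {t : ℝ | ∃ X : Matrix (ιA × ιB) (ιA × ιB) ℂ, X.IsHermitian ∧
    (∀ W : Matrix (ιA × ιB) (ιA × ιB) ℂ, IsPPT W → |((X * W).trace).re| ≤ (W.trace).re) ∧
    opNorm X = ((X * ω).trace).re ∧ t = ((X * ρ).trace).re} - 1) / 2

noncomputable def temperedRob [Fintype ιA] [Fintype ιB] [DecidableEq ιA] [DecidableEq ιB]
    (ρ : Matrix (ιA × ιB) (ιA × ιB) ℂ) : ℝ :=
  temperedRobRel ρ ρ

/-- The channel tempered negativity. -/
noncomputable def chanTemperedNeg [Fintype ιA] [Fintype ιB] [DecidableEq ιA] [DecidableEq ιB]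
    (Λ : Matrix ιA ιA ℂ →ₗ[ℂ] Matrix ιB ιB ℂ) : ℝ :=
  sSup {t : ℝ | ∃ ρ : Matrix (ιA × ιA) (ιA × ιA) ℂ, IsState ρ ∧
    t = temperedNeg ((idTensor ιA Λ) ρ)}

/-- The channel tempered robustness `R^τ(Λ'|Λ)`. -/
noncomputable def chanTemperedRobRel [Fintype ιA] [Fintype ιB] [DecidableEq ιA] [DecidableEq ιB]
    (Λ' Λ : Matrix ιA ιA ℂ →ₗ[ℂ] Matrix ιB ιB ℂ) : ℝ :=
  sSup {t : ℝ | ∃ ρ : Matrix (ιA × ιA) (ιA × ιA) ℂ, IsState ρ ∧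
    t = temperedRobRel ((idTensor ιA Λ') ρ) ((idTensor ιA Λ) ρ)}

/-- The diamond norm. -/
noncomputable def diamondNorm [Fintype ιA] [Fintype ιB] [DecidableEq ιA] [DecidableEq ιB]
    (Φ : Matrix ιA ιA ℂ →ₗ[ℂ] Matrix ιB ιB ℂ) : ℝ :=
  sSup {t : ℝ | ∃ ρ : Matrix (ιA × ιA) (ιA × ιA) ℂ, IsState ρ ∧
    t = traceNorm ((idTensor ιA Φ) ρ)}

/-- The `n`-fold tensor power of a linear map on matrices. -/
noncomputable def tensorPow [Fintype ιA] [DecidableEq ιA] (n : ℕ)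
    (Λ : Matrix ιA ιA ℂ →ₗ[ℂ] Matrix ιB ιB ℂ) :
    Matrix (Fin n → ιA) (Fin n → ιA) ℂ →ₗ[ℂ] Matrix (Fin n → ιB) (Fin n → ιB) ℂ where
  toFun M := Matrix.of fun p q => ∑ a : Fin n → ιA, ∑ b : Fin n → ιA,
      M a b * ∏ i, Λ (Matrix.single (a i) (b i) 1) (p i) (q i)
  map_add' M N := by
    funext p q
    simp [Matrix.add_apply, add_mul, Finset.sum_add_distrib]
  map_smul' c M := by
    funext p q
    simp [Matrix.smul_apply, Finset.mul_sum, mul_assoc]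

/-- The `n`-fold tensor power of a bipartite state, regarded as bipartite across the `Aⁿ:Bⁿ` cut. -/
noncomputable def statePow (n : ℕ) (ρ : Matrix (ιA × ιB) (ιA × ιB) ℂ) :
    Matrix ((Fin n → ιA) × (Fin n → ιB)) ((Fin n → ιA) × (Fin n → ιB)) ℂ :=
  Matrix.of fun p q => ∏ i, ρ (p.1 i, p.2 i) (q.1 i, q.2 i)

/-- The Choi matrix `J_Φ = (1/d_A) ∑_{ij} |i⟩⟨j| ⊗ Φ(|i⟩⟨j|)`. -/
noncomputable def choi [Fintype ιA] [DecidableEq ιA]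
    (Φ : Matrix ιA ιA ℂ →ₗ[ℂ] Matrix ιB ιB ℂ) : Matrix (ιA × ιB) (ιA × ιB) ℂ :=
  Matrix.of fun p q => (Fintype.card ιA : ℂ)⁻¹ * Φ (Matrix.single p.1 q.1 1) p.2 q.2


/-- Complete positivity. -/
def IsCP [Fintype ιA] [Fintype ιB] (Φ : Matrix ιA ιA ℂ →ₗ[ℂ] Matrix ιB ιB ℂ) : Prop :=
  ∀ (k : ℕ) (X : Matrix (Fin k × ιA) (Fin k × ιA) ℂ), X.PosSemidef →
    ((idTensor (Fin k) Φ) X).PosSemidef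

/-- Trace preservation. -/
def IsTP [Fintype ιA] [Fintype ιB] (Φ : Matrix ιA ιA ℂ →ₗ[ℂ] Matrix ιB ιB ℂ) : Prop :=
  ∀ X : Matrix ιA ιA ℂ, (Φ X).trace = X.trace

/-- A quantum channel: completely positive and trace preserving. -/
def IsChannel [Fintype ιA] [Fintype ιB] (Φ : Matrix ιA ιA ℂ →ₗ[ℂ] Matrix ιB ιB ℂ) : Prop :=
  IsCP Φ ∧ IsTP Φ

/-- A map is PPT-binding if `id_k ⊗ Φ` sends positive semidefinite matrices to PPT matrices. -/
def PPTBinding [Fintype ιA] [Fintype ιB] (Φ : Matrix ιA ιA ℂ →ₗ[ℂ] Matrix ιB ιB ℂ) : Prop :=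
  ∀ (k : ℕ) (X : Matrix (Fin k × ιA) (Fin k × ιA) ℂ), X.PosSemidef →
    IsPPT ((idTensor (Fin k) Φ) X)

/-- A PPT-binding channel. -/
def PPTBindingChannel [Fintype ιA] [Fintype ιB] (Φ : Matrix ιA ιA ℂ →ₗ[ℂ] Matrix ιB ιB ℂ) : Prop :=
  IsChannel Φ ∧ PPTBinding Φ

/-- The channel robustness with respect to PPT-binding channels. -/
noncomputable def RKE [Fintype ιA] [Fintype ιB] (Λ : Matrix ιA ιA ℂ →ₗ[ℂ] Matrix ιB ιB ℂ) : ℝ :=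
  sInf {l : ℝ | 0 ≤ l ∧ ∃ Γ Θ : Matrix ιA ιA ℂ →ₗ[ℂ] Matrix ιB ιB ℂ,
    PPTBindingChannel Γ ∧ PPTBindingChannel Θ ∧ Λ + (l : ℂ) • Γ = ((1 + l : ℝ) : ℂ) • Θ}

/-- The PPT robustness of a state. -/
noncomputable def RPPT [Fintype ιA] [Fintype ιB] (ρ : Matrix (ιA × ιB) (ιA × ιB) ℂ) : ℝ :=
  sInf {t : ℝ | ∃ δ : Matrix (ιA × ιB) (ιA × ιB) ℂ, IsPPT δ ∧ IsPPT (ρ + δ) ∧ (δ.trace).re = t}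


end Defs


section AuxProofs
open scoped Matrix.Norms.L2Operator MatrixOrder
set_option linter.unusedSectionVars false
variable {ι : Type*} [Fintype ι] [DecidableEq ι]

variable {ι : Type*} [Fintype ι] [DecidableEq ι]

noncomputable def euc (x : ι → ℂ) : EuclideanSpace ℂ ι := (WithLp.equiv 2 _).symm x

lemma euc_norm_sq (x : ι → ℂ) : star x ⬝ᵥ x = (‖euc x‖ : ℂ) ^ 2 := by
  rw [dotProduct_comm, ← EuclideanSpace.inner_toLp_toLp, inner_self_eq_norm_sq_to_K]; rfl

lemma dot_mulVec_abs_le (M : Matrix ι ι ℂ) (x y : ι → ℂ) :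
    ‖star x ⬝ᵥ M *ᵥ y‖ ≤ ‖M‖ * (‖euc x‖ * ‖euc y‖) := by
  have h1 : star x ⬝ᵥ (M *ᵥ y) = @inner ℂ _ _ (euc x) (toEuclideanCLM (𝕜 := ℂ) M (euc y)) := by
    show _ = inner ℂ (WithLp.toLp 2 x) (toEuclideanCLM (𝕜 := ℂ) M (WithLp.toLp 2 y))
    rw [toEuclideanCLM_toLp, EuclideanSpace.inner_toLp_toLp, dotProduct_comm]
  rw [h1]
  calc ‖_‖ ≤ ‖euc x‖ * ‖toEuclideanCLM (𝕜 := ℂ) M (euc y)‖ := norm_inner_le_norm _ _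
    _ ≤ ‖euc x‖ * (‖M‖ * ‖euc y‖) := by
        gcongr; exact (toEuclideanCLM (𝕜 := ℂ) M).le_opNorm _
    _ = _ := by ring

lemma norm_one_le' : ‖(1 : Matrix ι ι ℂ)‖ ≤ 1 := by
  rw [Matrix.cstar_norm_def, _root_.map_one]
  exact ContinuousLinearMap.norm_id_le

lemma euc_norm_one {x : ι → ℂ} (hx : star x ⬝ᵥ x = 1) : ‖euc x‖ = 1 := by
  have h := euc_norm_sq x
  rw [hx] at h
  have h2 : (‖euc x‖ : ℝ) ^ 2 = 1 := by exact_mod_cast h.symm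
  nlinarith [norm_nonneg (euc x)]

lemma norm_diagonal_le {d : ι → ℂ} {c : ℝ} (hc : 0 ≤ c) (h : ∀ i, ‖d i‖ ≤ c) :
    ‖(diagonal d : Matrix ι ι ℂ)‖ ≤ c := by
  rw [Matrix.cstar_norm_def]
  refine ContinuousLinearMap.opNorm_le_bound _ hc fun x => ?_
  have happ : ∀ i, (toEuclideanCLM (𝕜 := ℂ) (diagonal d) x) i = d i * x i := by
    intro i
    show (toLin' (diagonal d) (WithLp.equiv _ _ x)) i = _
    simp [toLin'_apply, mulVec, dotProduct, diagonal, Finset.sum_ite_eq, ite_mul]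
  rw [EuclideanSpace.norm_eq, EuclideanSpace.norm_eq]
  calc Real.sqrt (∑ i, ‖(toEuclideanCLM (𝕜 := ℂ) (diagonal d) x) i‖ ^ 2)
      ≤ Real.sqrt (∑ i, c ^ 2 * ‖x i‖ ^ 2) := by
        apply Real.sqrt_le_sqrt
        apply Finset.sum_le_sum
        intro i _
        rw [happ i, norm_mul, mul_pow]
        have h1 := h i
        have h2 := norm_nonneg (d i)
        have h3 := sq_nonneg (‖x i‖)
        nlinarith [mul_le_mul h1 h1 h2 hc]
    _ = c * Real.sqrt (∑ i, ‖x i‖ ^ 2) := by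
        rw [← Finset.mul_sum, Real.sqrt_mul (sq_nonneg c), Real.sqrt_sq hc]

lemma norm_unitary_le {U : Matrix ι ι ℂ} (hU : U ∈ Matrix.unitaryGroup ι ℂ) : ‖U‖ ≤ 1 := by
  have h1 : star U * U = 1 := Matrix.mem_unitaryGroup_iff'.mp hU
  have h2 : ‖star U * U‖ = ‖U‖ * ‖U‖ := CStarRing.norm_star_mul_self
  rw [h1] at h2
  nlinarith [norm_one_le' (ι := ι), norm_nonneg U, norm_nonneg (1 : Matrix ι ι ℂ)]

/-- Columns of the eigenvector unitary. -/
noncomputable def evCol {M : Matrix ι ι ℂ} (hM : M.IsHermitian) (i : ι) : ι → ℂ :=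
  fun k => (hM.eigenvectorUnitary : Matrix ι ι ℂ) k i

lemma evCol_unit {M : Matrix ι ι ℂ} (hM : M.IsHermitian) (i : ι) :
    star (evCol hM i) ⬝ᵥ evCol hM i = 1 := by
  have h1 : star (hM.eigenvectorUnitary : Matrix ι ι ℂ) * (hM.eigenvectorUnitary : Matrix ι ι ℂ)
      = 1 := Matrix.mem_unitaryGroup_iff'.mp hM.eigenvectorUnitary.2
  have h2 := congrFun (congrFun h1 i) i
  simpa [Matrix.mul_apply, Matrix.one_apply, dotProduct, evCol, Matrix.star_apply] using h2

lemma trace_mul_eigen {M : Matrix ι ι ℂ} (hM : M.IsHermitian) (X : Matrix ι ι ℂ) :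
    (X * M).trace = ∑ i, (hM.eigenvalues i : ℂ) * (star (evCol hM i) ⬝ᵥ X *ᵥ evCol hM i) := by
  set U : Matrix ι ι ℂ := (hM.eigenvectorUnitary : Matrix ι ι ℂ) with hUdef
  have hspec : M = U * diagonal (RCLike.ofReal ∘ hM.eigenvalues) * star U := hM.spectral_theorem
  calc (X * M).trace
      = ((star U * X * U) * diagonal (RCLike.ofReal ∘ hM.eigenvalues)).trace := by
        conv_lhs => rw [hspec]
        rw [show X * (U * diagonal (RCLike.ofReal ∘ hM.eigenvalues) * star U)
            = (X * U * diagonal (RCLike.ofReal ∘ hM.eigenvalues)) * star U by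
          rw [← mul_assoc, ← mul_assoc]]
        rw [Matrix.trace_mul_comm]
        rw [← mul_assoc, ← mul_assoc]
    _ = ∑ i, (star U * X * U) i i * (hM.eigenvalues i : ℂ) := by
        rw [Matrix.trace]
        congr 1
        funext i
        rw [Matrix.diag]
        rw [Matrix.mul_diagonal]
        rfl
    _ = _ := by
        congr 1
        funext i
        rw [mul_comm]
        congr 1
        simp only [Matrix.mul_apply, dotProduct, mulVec, Matrix.star_apply, evCol,
          Pi.star_apply, Finset.sum_mul, Finset.mul_sum]
        rw [Finset.sum_comm]
        refine Finset.sum_congr rfl fun a _ => Finset.sum_congr rfl fun b _ => ?_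
        ring

lemma trace_eq_sum_eig {M : Matrix ι ι ℂ} (hM : M.IsHermitian) :
    M.trace = ∑ i, (hM.eigenvalues i : ℂ) := by
  have h := trace_mul_eigen hM 1
  rw [one_mul] at h
  rw [h]
  congr 1
  funext i
  rw [Matrix.one_mulVec, evCol_unit hM i, mul_one]

lemma herm_norm_le {M : Matrix ι ι ℂ} (hM : M.IsHermitian) {c : ℝ} (hc : 0 ≤ c)
    (h : ∀ i, |hM.eigenvalues i| ≤ c) : ‖M‖ ≤ c := by
  set U : Matrix ι ι ℂ := (hM.eigenvectorUnitary : Matrix ι ι ℂ) with hUdef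
  have hstar : star U ∈ Matrix.unitaryGroup ι ℂ := Unitary.star_mem hM.eigenvectorUnitary.2
  have h1 : ‖U‖ ≤ 1 := norm_unitary_le hM.eigenvectorUnitary.2
  have h2 : ‖star U‖ ≤ 1 := norm_unitary_le hstar
  set D : Matrix ι ι ℂ := diagonal (RCLike.ofReal ∘ hM.eigenvalues) with hD
  have h3 : ‖D‖ ≤ c := norm_diagonal_le hc fun i => by
    simpa [Function.comp, Complex.norm_real] using h i
  have k1 : ‖U * D * star U‖ ≤ ‖U * D‖ * ‖star U‖ := norm_mul_le _ _
  have k2 : ‖U * D‖ ≤ ‖U‖ * ‖D‖ := norm_mul_le _ _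
  have : M = U * D * star U := hM.spectral_theorem
  rw [this]
  nlinarith [norm_nonneg (U * D), norm_nonneg (star U), norm_nonneg U, norm_nonneg D]


lemma opNorm_eq_norm (M : Matrix ι ι ℂ) : opNorm M = ‖M‖ := rfl

lemma traceNorm_eq_sqrt (M : Matrix ι ι ℂ) :
    traceNorm M = ((CFC.sqrt (Mᴴ * M)).trace).re := by
  rw [CFC.sqrt_eq_real_sqrt _ (posSemidef_conjTranspose_mul_self M).nonneg,
    cfcₙ_eq_cfc (hf := Real.continuous_sqrt.continuousOn) (hf0 := Real.sqrt_zero), (posSemidef_conjTranspose_mul_self M).1.cfc_eq]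
  rfl

lemma traceNorm_herm {M : Matrix ι ι ℂ} (hM : M.IsHermitian) :
    traceNorm M = ∑ i, |hM.eigenvalues i| := by
  set U : Matrix ι ι ℂ := (hM.eigenvectorUnitary : Matrix ι ι ℂ) with hU
  set lam := hM.eigenvalues with hlam
  have hUU : star U * U = 1 := Matrix.mem_unitaryGroup_iff'.mp hM.eigenvectorUnitary.2
  have hmm : ∀ Y : Matrix ι ι ℂ, star U * (U * Y) = Y := fun Y => by
    rw [← mul_assoc, hUU, one_mul]
  have key : ∀ f g : ι → ℂ,
      (U * diagonal f * star U) * (U * diagonal g * star U)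
        = U * diagonal (fun i => f i * g i) * star U := by
    intro f g
    calc (U * diagonal f * star U) * (U * diagonal g * star U)
        = U * (diagonal f * (star U * (U * (diagonal g * star U)))) := by
          simp only [mul_assoc]
      _ = U * (diagonal f * (diagonal g * star U)) := by rw [hmm]
      _ = U * ((diagonal f * diagonal g) * star U) := by rw [mul_assoc]
      _ = U * diagonal (fun i => f i * g i) * star U := by
          rw [diagonal_mul_diagonal, mul_assoc]
  set S : Matrix ι ι ℂ := U * diagonal (fun i => ((|lam i| : ℝ) : ℂ)) * star U with hS
  have hSpsd : S.PosSemidef := by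
    have hdiag : (diagonal (fun i => ((|lam i| : ℝ) : ℂ))).PosSemidef :=
      posSemidef_diagonal_iff.mpr fun i => by
        rw [Complex.zero_le_real]; exact abs_nonneg _
    have := hdiag.mul_mul_conjTranspose_same U
    rwa [← Matrix.star_eq_conjTranspose] at this
  have hMH : M = U * diagonal (fun i => ((lam i : ℝ) : ℂ)) * star U := hM.spectral_theorem
  have hsq : S ^ 2 = Mᴴ * M := by
    rw [pow_two, hM.eq, hS, key, hMH, key]
    have hfg : (fun i => ((|lam i| : ℝ) : ℂ) * ((|lam i| : ℝ) : ℂ))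
        = (fun i => ((lam i : ℝ) : ℂ) * ((lam i : ℝ) : ℂ)) := by
      funext i
      rw [← Complex.ofReal_mul, ← Complex.ofReal_mul, abs_mul_abs_self]
    rw [hfg]
  have hSeq : S = CFC.sqrt (Mᴴ * M) :=
    (CFC.sqrt_unique (by rw [← pow_two]; exact hsq) hSpsd.nonneg).symm
  rw [traceNorm_eq_sqrt]
  rw [← hSeq, hS, Matrix.trace_mul_cycle, hUU, one_mul, Matrix.trace_diagonal,
    ← Complex.ofReal_sum, Complex.ofReal_re]

lemma traceNorm_psd {M : Matrix ι ι ℂ} (hM : M.PosSemidef) :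
    traceNorm M = (M.trace).re := by
  rw [traceNorm_herm hM.1, trace_eq_sum_eig hM.1, ← Complex.ofReal_sum, Complex.ofReal_re]
  exact Finset.sum_congr rfl fun i _ => abs_of_nonneg (hM.eigenvalues_nonneg i)

lemma abs_re_trace_mul_le {M : Matrix ι ι ℂ} (hM : M.IsHermitian) (X : Matrix ι ι ℂ) :
    |((X * M).trace).re| ≤ ‖X‖ * traceNorm M := by
  rw [trace_mul_eigen hM, traceNorm_herm hM]
  calc |(∑ i, (hM.eigenvalues i : ℂ) * (star (evCol hM i) ⬝ᵥ X *ᵥ evCol hM i)).re|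
      ≤ ‖∑ i, (hM.eigenvalues i : ℂ) * (star (evCol hM i) ⬝ᵥ X *ᵥ evCol hM i)‖ :=
        Complex.abs_re_le_norm _
    _ ≤ ∑ i, ‖(hM.eigenvalues i : ℂ) * (star (evCol hM i) ⬝ᵥ X *ᵥ evCol hM i)‖ :=
        norm_sum_le _ _
    _ ≤ ∑ i, |hM.eigenvalues i| * ‖X‖ := by
        apply Finset.sum_le_sum
        intro i _
        rw [norm_mul, Complex.norm_real]
        have h1 := dot_mulVec_abs_le X (evCol hM i) (evCol hM i)
        rw [euc_norm_one (evCol_unit hM i)] at h1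
        apply mul_le_mul_of_nonneg_left _ (abs_nonneg _)
        simpa using h1
    _ = ‖X‖ * ∑ i, |hM.eigenvalues i| := by rw [← Finset.sum_mul, mul_comm]

lemma single_dot (M : Matrix ι ι ℂ) (p q : ι) :
    star (Pi.single p (1:ℂ)) ⬝ᵥ M *ᵥ Pi.single q (1:ℂ) = M p q := by
  have h1 : M *ᵥ Pi.single q (1:ℂ) = fun i => M i q := by
    funext i
    simp [mulVec, dotProduct, Pi.single_apply, mul_ite]
  rw [h1]
  have h2 : star (Pi.single p (1:ℂ) : ι → ℂ) = (Pi.single p (1:ℂ) : ι → ℂ) := by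
    funext i
    rcases eq_or_ne i p with h|h <;>
      simp [h, Pi.star_apply, Pi.single_apply]
  rw [h2]
  simp [dotProduct, Pi.single_apply, ite_mul, Finset.sum_ite_eq, Finset.sum_ite_eq']

lemma euc_single_norm (p : ι) : ‖euc (Pi.single p (1:ℂ))‖ = 1 := by
  rw [euc, WithLp.equiv_symm_apply, PiLp.norm_toLp_single, norm_one]

lemma entry_abs_le (M : Matrix ι ι ℂ) (p q : ι) : ‖M p q‖ ≤ ‖M‖ := by
  have h := dot_mulVec_abs_le M (Pi.single p (1:ℂ)) (Pi.single q (1:ℂ))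
  rw [single_dot, euc_single_norm, euc_single_norm] at h
  simpa using h

lemma traceNorm_le_card_norm (M : Matrix ι ι ℂ) :
    traceNorm M ≤ (Fintype.card ι : ℝ) * ‖M‖ := by
  set hP := Matrix.posSemidef_conjTranspose_mul_self M
  set S := CFC.sqrt (Mᴴ * M) with hSdef
  have hPS : S.PosSemidef := (CFC.sqrt_nonneg _).posSemidef
  have hnorm : ‖S‖ = ‖M‖ := by
    have h1 : ‖star S * S‖ = ‖S‖ * ‖S‖ := CStarRing.norm_star_mul_self
    have h2 : star S = S := by
      rw [Matrix.star_eq_conjTranspose, hPS.1.eq]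
    have h3 : S * S = Mᴴ * M := CFC.sqrt_mul_sqrt_self _ hP.nonneg
    have h4 : ‖Mᴴ * M‖ = ‖M‖ * ‖M‖ := by
      rw [← Matrix.star_eq_conjTranspose]; exact CStarRing.norm_star_mul_self
    have h5 : ‖S‖ * ‖S‖ = ‖M‖ * ‖M‖ := by rw [← h1, h2, h3, h4]
    calc ‖S‖ = Real.sqrt (‖S‖ * ‖S‖) := by rw [Real.sqrt_mul_self (norm_nonneg _)]
      _ = Real.sqrt (‖M‖ * ‖M‖) := by rw [h5]
      _ = ‖M‖ := Real.sqrt_mul_self (norm_nonneg _)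
  have htr : traceNorm M = (S.trace).re := traceNorm_eq_sqrt M
  rw [htr, Matrix.trace]
  rw [Complex.re_sum]
  calc ∑ i, (S.diag i).re ≤ ∑ _i : ι, ‖M‖ := by
        apply Finset.sum_le_sum
        intro i _
        calc (S.diag i).re ≤ ‖S i i‖ := Complex.re_le_norm _
          _ ≤ ‖S‖ := entry_abs_le S i i
          _ = ‖M‖ := hnorm
    _ = (Fintype.card ι : ℝ) * ‖M‖ := by
        rw [Finset.sum_const, Finset.card_univ, nsmul_eq_mul]

lemma norm_le_sum_entries (M : Matrix ι ι ℂ) : ‖M‖ ≤ ∑ p : ι, ∑ q : ι, ‖M p q‖ := by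
  conv_lhs => rw [matrix_eq_sum_single M]
  refine le_trans (norm_sum_le _ _) (Finset.sum_le_sum fun p _ => ?_)
  refine le_trans (norm_sum_le _ _) (Finset.sum_le_sum fun q _ => ?_)
  rw [Matrix.cstar_norm_def]
  refine ContinuousLinearMap.opNorm_le_bound _ (norm_nonneg _) fun x => ?_
  have happ : toEuclideanCLM (𝕜 := ℂ) (single p q (M p q)) x
      = (WithLp.equiv 2 _).symm (Pi.single p (M p q * x q)) := by
    show (WithLp.equiv 2 _).symm (toLin' (single p q (M p q)) (WithLp.equiv _ _ x)) = _
    congr 1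
    funext i
    simp [toLin'_apply, mulVec, dotProduct, single, Pi.single_apply, ite_and, ite_mul,
      eq_comm]
  rw [happ, WithLp.equiv_symm_apply, PiLp.norm_toLp_single, norm_mul]
  have hxq : ‖x q‖ ≤ ‖x‖ := by
    rw [EuclideanSpace.norm_eq]
    have : ‖x q‖ = Real.sqrt (‖x q‖ ^ 2) := (Real.sqrt_sq (norm_nonneg _)).symm
    rw [this]
    apply Real.sqrt_le_sqrt
    exact Finset.single_le_sum (f := fun i => ‖x i‖ ^ 2) (fun i _ => sq_nonneg _)
      (Finset.mem_univ q)
  exact mul_le_mul_of_nonneg_left hxq (norm_nonneg _)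

lemma psd_norm_le_trace {M : Matrix ι ι ℂ} (hM : M.PosSemidef) : ‖M‖ ≤ (M.trace).re := by
  have htr : (M.trace).re = ∑ i, hM.1.eigenvalues i := by
    rw [trace_eq_sum_eig hM.1, ← Complex.ofReal_sum, Complex.ofReal_re]
  refine herm_norm_le hM.1 ?_ fun i => ?_
  · rw [htr]; exact Finset.sum_nonneg fun i _ => hM.eigenvalues_nonneg i
  · rw [abs_of_nonneg (hM.eigenvalues_nonneg i), htr]
    exact Finset.single_le_sum (fun j _ => hM.eigenvalues_nonneg j) (Finset.mem_univ i)

lemma dot_conj_herm {M : Matrix ι ι ℂ} (hM : M.IsHermitian) (x : ι → ℂ) :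
    star (star x ⬝ᵥ M *ᵥ x) = star x ⬝ᵥ M *ᵥ x := by
  conv_rhs => rw [← hM.eq]
  simp only [dotProduct, mulVec, star_sum, star_mul', Pi.star_apply, star_star,
    conjTranspose_apply, Finset.mul_sum, Finset.sum_mul, map_sum]
  rw [Finset.sum_comm]
  refine Finset.sum_congr rfl fun i _ => Finset.sum_congr rfl fun j _ => ?_
  ring

lemma psd_of_herm_dot {M : Matrix ι ι ℂ} (hH : M.IsHermitian)
    (h : ∀ x, 0 ≤ (star x ⬝ᵥ M *ᵥ x).re) : M.PosSemidef := by
  refine .of_dotProduct_mulVec_nonneg hH fun x => ?_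
  have h1 := dot_conj_herm hH x
  have h2 : (star x ⬝ᵥ M *ᵥ x).im = 0 := by
    have := congrArg Complex.im h1
    simp only [Complex.star_def, Complex.conj_im] at this
    linarith
  rw [Complex.le_def]
  simp [h2, h x]

lemma psd_vecMulVec (v : ι → ℂ) : (vecMulVec v (star v)).PosSemidef := by
  refine .of_dotProduct_mulVec_nonneg ?_ fun x => ?_
  · ext i j
    simp [conjTranspose_apply, vecMulVec_apply, Pi.star_apply, star_mul', mul_comm]
  · have h1 : vecMulVec v (star v) *ᵥ x = (star v ⬝ᵥ x) • v := by
      funext i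
      simp [mulVec, vecMulVec_apply, dotProduct, Finset.mul_sum, Pi.star_apply, mul_assoc,
        mul_comm, mul_left_comm]
    rw [h1, dotProduct_smul]
    have h2 : star x ⬝ᵥ v = star (star v ⬝ᵥ x) := by
      simp only [dotProduct, star_sum, star_mul', Pi.star_apply, star_star]
      exact Finset.sum_congr rfl fun i _ => mul_comm _ _
    rw [smul_eq_mul, h2]
    exact mul_star_self_nonneg _

lemma trace_vecMulVec (v : ι → ℂ) : (vecMulVec v (star v)).trace = star v ⬝ᵥ v := by
  simp [Matrix.trace, Matrix.diag, vecMulVec_apply, dotProduct, Pi.star_apply, mul_comm]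

lemma trace_mul_vecMulVec (X : Matrix ι ι ℂ) (v : ι → ℂ) :
    (X * vecMulVec v (star v)).trace = star v ⬝ᵥ X *ᵥ v := by
  simp only [Matrix.trace, Matrix.diag, Matrix.mul_apply, vecMulVec_apply, dotProduct,
    mulVec, Pi.star_apply, Finset.mul_sum]
  refine Finset.sum_congr rfl fun i _ => Finset.sum_congr rfl fun j _ => ?_
  ring

end AuxProofs

section AuxB
open scoped Matrix.Norms.L2Operator
set_option linter.unusedSectionVars false
variable {ιA ιB : Type*} [Fintype ιA] [Fintype ιB] [DecidableEq ιA] [DecidableEq ιB]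

lemma sum_swap3 {g1 g2 g3 : Type*} [Fintype g1] [Fintype g2] [Fintype g3]
    (f : g1 → g2 → g3 → ℂ) : (∑ i, ∑ k, ∑ l, f i k l) = ∑ l, ∑ i, ∑ k, f i k l := by
  calc (∑ i, ∑ k, ∑ l, f i k l) = ∑ i, ∑ l, ∑ k, f i k l :=
        Finset.sum_congr rfl fun i _ => Finset.sum_comm
    _ = ∑ l, ∑ i, ∑ k, f i k l := Finset.sum_comm

lemma ptranspose_add (M N : Matrix (ιA × ιB) (ιA × ιB) ℂ) :
    ptranspose (M + N) = ptranspose M + ptranspose N := by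
  funext p q
  simp [ptranspose]

lemma ptranspose_one : ptranspose (1 : Matrix (ιA × ιB) (ιA × ιB) ℂ) = 1 := by
  funext p q
  simp only [ptranspose, Matrix.of_apply, Matrix.one_apply, Prod.ext_iff]
  by_cases h1 : p.1 = q.1 <;> by_cases h2 : p.2 = q.2 <;> simp [h1, h2, eq_comm]

lemma isPPT_one : IsPPT (1 : Matrix (ιA × ιB) (ιA × ιB) ℂ) :=
  ⟨Matrix.PosSemidef.one, by rw [ptranspose_one]; exact Matrix.PosSemidef.one⟩

lemma ptranspose_herm {M : Matrix (ιA × ιB) (ιA × ιB) ℂ} (hM : M.IsHermitian) :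
    (ptranspose M).IsHermitian := by
  ext p q
  have := congrFun (congrFun hM (p.1, q.2)) (q.1, p.2)
  simpa [ptranspose, conjTranspose_apply] using this

lemma psd_one_add_ptranspose (v : ιA × ιB → ℂ) (hv : star v ⬝ᵥ v = 1) :
    (1 + ptranspose (vecMulVec v (star v))).PosSemidef := by
  set P : Matrix (ιA × ιB) (ιA × ιB) ℂ := vecMulVec v (star v) with hP
  have hPh : (ptranspose P).IsHermitian := ptranspose_herm (psd_vecMulVec v).1
  apply psd_of_herm_dot (Matrix.isHermitian_one.add hPh)
  intro x
  set B : ιB → ιB → ℂ := fun j l => ∑ i, star (x (i, j)) * v (i, l) with hB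
  -- the partial transpose quadratic form
  have hz : (star x ⬝ᵥ ptranspose P *ᵥ x) = ∑ j, ∑ l, B j l * star (B l j) := by
    have e2 : ∀ j l, B j l * star (B l j)
        = ∑ i, ∑ k, star (x (i, j)) * v (i, l) * star (v (k, j)) * x (k, l) := by
      intro j l
      simp only [hB, star_sum, star_mul', star_star, Finset.sum_mul, Finset.mul_sum]
      rw [Finset.sum_comm]
      refine Finset.sum_congr rfl fun i _ => Finset.sum_congr rfl fun k _ => ?_
      ring
    have e1 : (star x ⬝ᵥ ptranspose P *ᵥ x)
        = ∑ i, ∑ j, ∑ k, ∑ l, star (x (i, j)) * v (i, l) * star (v (k, j)) * x (k, l) := by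
      simp only [dotProduct, mulVec, ptranspose, Matrix.of_apply, hP, vecMulVec_apply,
        Pi.star_apply, Finset.mul_sum, Fintype.sum_prod_type]
      refine Finset.sum_congr rfl fun i _ => Finset.sum_congr rfl fun j _ => ?_
      refine Finset.sum_congr rfl fun k _ => Finset.sum_congr rfl fun l _ => ?_
      ring
    rw [e1]
    simp only [e2]
    rw [Finset.sum_comm]
    exact Finset.sum_congr rfl fun j _ => sum_swap3 _
  have hBound : ‖∑ j, ∑ l, B j l * star (B l j)‖ ≤ (star x ⬝ᵥ x).re := by
    have hxj : ∀ j, ∑ i, ‖x (i, j)‖ ^ 2 = ‖euc (fun i => x (i, j))‖ ^ 2 := by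
      intro j
      rw [EuclideanSpace.norm_eq, Real.sq_sqrt]
      · rfl
      · exact Finset.sum_nonneg fun i _ => sq_nonneg _
    have hCS : ∀ j l, ‖B j l‖ ^ 2 ≤ (∑ i, ‖x (i, j)‖ ^ 2) * (∑ i, ‖v (i, l)‖ ^ 2) := by
      intro j l
      have : B j l = @inner ℂ _ _ (euc (fun i => x (i, j))) (euc (fun i => v (i, l))) := by
        rw [euc, euc, WithLp.equiv_symm_apply, EuclideanSpace.inner_toLp_toLp, dotProduct_comm]
        rfl
      rw [this, hxj]
      have h2 : ∑ i, ‖v (i, l)‖ ^ 2 = ‖euc (fun i => v (i, l))‖ ^ 2 := by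
        rw [EuclideanSpace.norm_eq, Real.sq_sqrt]
        · rfl
        · exact Finset.sum_nonneg fun i _ => sq_nonneg _
      rw [h2]
      have := norm_inner_le_norm (𝕜 := ℂ) (euc (fun i => x (i, j))) (euc (fun i => v (i, l)))
      nlinarith [norm_nonneg (euc (fun i => x (i, j))), norm_nonneg (euc (fun i => v (i, l))),
        norm_nonneg (@inner ℂ _ _ (euc (fun i => x (i, j))) (euc (fun i => v (i, l))))]
    have hnormx : (star x ⬝ᵥ x).re = ∑ j, ∑ i, ‖x (i, j)‖ ^ 2 := by
      have : (star x ⬝ᵥ x) = ∑ p : ιA × ιB, (‖x p‖ ^ 2 : ℂ) := by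
        simp only [dotProduct, Pi.star_apply]
        refine Finset.sum_congr rfl fun p _ => ?_
        rw [Complex.star_def, ← Complex.normSq_eq_conj_mul_self, Complex.normSq_eq_norm_sq]
        push_cast
        rfl
      rw [this, Fintype.sum_prod_type_right]
      simp only [Complex.re_sum, ← Complex.ofReal_pow, Complex.ofReal_re]
    have hnormv : (1 : ℝ) = ∑ l, ∑ i, ‖v (i, l)‖ ^ 2 := by
      have : (star v ⬝ᵥ v) = ∑ p : ιA × ιB, (‖v p‖ ^ 2 : ℂ) := by
        simp only [dotProduct, Pi.star_apply]
        refine Finset.sum_congr rfl fun p _ => ?_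
        rw [Complex.star_def, ← Complex.normSq_eq_conj_mul_self, Complex.normSq_eq_norm_sq]
        push_cast
        rfl
      rw [hv] at this
      have h2 := congrArg Complex.re this
      rw [Fintype.sum_prod_type_right] at h2
      simpa only [Complex.re_sum, ← Complex.ofReal_pow, Complex.ofReal_re,
        Complex.one_re] using h2
    calc ‖∑ j, ∑ l, B j l * star (B l j)‖
        ≤ ∑ j, ∑ l, ‖B j l * star (B l j)‖ := by
          refine le_trans (norm_sum_le _ _) (Finset.sum_le_sum fun j _ => norm_sum_le _ _)
      _ = ∑ j, ∑ l, ‖B j l‖ * ‖B l j‖ := by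
          refine Finset.sum_congr rfl fun j _ => Finset.sum_congr rfl fun l _ => ?_
          rw [norm_mul, norm_star]
      _ ≤ ∑ j, ∑ l, (‖B j l‖ ^ 2 + ‖B l j‖ ^ 2) / 2 := by
          refine Finset.sum_le_sum fun j _ => Finset.sum_le_sum fun l _ => ?_
          nlinarith [sq_nonneg (‖B j l‖ - ‖B l j‖)]
      _ = ∑ j, ∑ l, ‖B j l‖ ^ 2 := by
          have hsymm : ∑ j, ∑ l, ‖B l j‖ ^ 2 = ∑ j, ∑ l, ‖B j l‖ ^ 2 := Finset.sum_comm
          simp only [add_div, Finset.sum_add_distrib, ← Finset.sum_div]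
          rw [hsymm]
          ring
      _ ≤ ∑ j, ∑ l, (∑ i, ‖x (i, j)‖ ^ 2) * (∑ i, ‖v (i, l)‖ ^ 2) := by
          exact Finset.sum_le_sum fun j _ => Finset.sum_le_sum fun l _ => hCS j l
      _ = (∑ j, ∑ i, ‖x (i, j)‖ ^ 2) * (∑ l, ∑ i, ‖v (i, l)‖ ^ 2) := by
          rw [Finset.sum_mul]
          refine Finset.sum_congr rfl fun j _ => ?_
          rw [← Finset.mul_sum]
      _ = (star x ⬝ᵥ x).re := by rw [← hnormx, ← hnormv, mul_one]
  have hsplit : (star x ⬝ᵥ (1 + ptranspose P) *ᵥ x).re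
      = (star x ⬝ᵥ x).re + (star x ⬝ᵥ ptranspose P *ᵥ x).re := by
    rw [add_mulVec, one_mulVec, dotProduct_add, Complex.add_re]
  rw [hsplit, hz]
  have h1 : |(∑ j, ∑ l, B j l * star (B l j)).re| ≤ (star x ⬝ᵥ x).re := by
    refine le_trans ?_ hBound
    exact Complex.abs_re_le_norm _
  linarith [(abs_le.mp h1).1]

lemma isPPT_one_add_vecMulVec (v : ιA × ιB → ℂ) (hv : star v ⬝ᵥ v = 1) :
    IsPPT (1 + vecMulVec v (star v)) := by
  constructor
  · exact Matrix.PosSemidef.one.add (psd_vecMulVec v)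
  · rw [ptranspose_add, ptranspose_one]
    exact psd_one_add_ptranspose v hv

lemma feas_norm_le {X : Matrix (ιA × ιB) (ιA × ιB) ℂ} (hX : X.IsHermitian)
    (hW : ∀ W : Matrix (ιA × ιB) (ιA × ιB) ℂ, IsPPT W → |((X * W).trace).re| ≤ (W.trace).re) :
    ‖X‖ ≤ 2 * (Fintype.card (ιA × ιB) : ℝ) + 1 := by
  have hD : (0:ℝ) ≤ (Fintype.card (ιA × ιB) : ℝ) := Nat.cast_nonneg _
  refine herm_norm_le hX (by linarith) fun i => ?_
  set v : ιA × ιB → ℂ := ⇑(hX.eigenvectorBasis i) with hvdef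
  have hv : star v ⬝ᵥ v = 1 := by
    have horth : ‖hX.eigenvectorBasis i‖ = 1 := hX.eigenvectorBasis.orthonormal.1 i
    have h1 : (star v ⬝ᵥ v) = @inner ℂ _ _ (hX.eigenvectorBasis i) (hX.eigenvectorBasis i) :=
      (by rw [EuclideanSpace.inner_eq_star_dotProduct, dotProduct_comm])
    rw [h1, inner_self_eq_norm_sq_to_K, horth]
    norm_num
  have hlam : hX.eigenvalues i = ((X * vecMulVec v (star v)).trace).re := by
    rw [trace_mul_vecMulVec, hX.eigenvalues_eq i]
    simp [RCLike.re_to_complex]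
    rfl
  have hIdTr : ((1 : Matrix (ιA × ιB) (ιA × ιB) ℂ).trace).re = (Fintype.card (ιA × ιB) : ℝ) := by
    rw [Matrix.trace_one]
    simp
  have h1 := hW 1 isPPT_one
  rw [mul_one, hIdTr] at h1
  have h2 := hW _ (isPPT_one_add_vecMulVec v hv)
  have htr2 : (((1 : Matrix (ιA × ιB) (ιA × ιB) ℂ) + vecMulVec v (star v)).trace).re
      = (Fintype.card (ιA × ιB) : ℝ) + 1 := by
    rw [Matrix.trace_add, Complex.add_re, hIdTr, _root_.trace_vecMulVec, hv]
    norm_num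
  have hsplit : ((X * ((1 : Matrix (ιA × ιB) (ιA × ιB) ℂ) + vecMulVec v (star v))).trace).re
      = (X.trace).re + ((X * vecMulVec v (star v)).trace).re := by
    rw [mul_add, mul_one, Matrix.trace_add, Complex.add_re]
  rw [htr2, hsplit] at h2
  rw [hlam]
  have ha := abs_le.mp h1
  have hb := abs_le.mp h2
  rw [abs_le]
  constructor <;> nlinarith [ha.1, ha.2, hb.1, hb.2]

lemma psd_sub_herm {M N : Matrix (ιA × ιB) (ιA × ιB) ℂ} (hM : M.PosSemidef)
    (hN : N.PosSemidef) : (M - N).IsHermitian := hM.1.sub hN.1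

end AuxB

section AuxC
open scoped Matrix.Norms.L2Operator
set_option linter.unusedSectionVars false
variable {ιA ιB : Type*} [Fintype ιA] [Fintype ιB] [DecidableEq ιA] [DecidableEq ιB]

/-- The feasible-value set appearing in `temperedRobRel`. -/
def robSet (σ ω : Matrix (ιA × ιB) (ιA × ιB) ℂ) : Set ℝ :=
  {t : ℝ | ∃ X : Matrix (ιA × ιB) (ιA × ιB) ℂ, X.IsHermitian ∧
    (∀ W : Matrix (ιA × ιB) (ιA × ιB) ℂ, IsPPT W → |((X * W).trace).re| ≤ (W.trace).re) ∧
    opNorm X = ((X * ω).trace).re ∧ t = ((X * σ).trace).re}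

lemma temperedRobRel_eq (σ ω : Matrix (ιA × ιB) (ιA × ιB) ℂ) :
    temperedRobRel σ ω = (sSup (robSet σ ω) - 1) / 2 := rfl

lemma zero_mem_robSet (σ ω : Matrix (ιA × ιB) (ιA × ιB) ℂ) : (0:ℝ) ∈ robSet σ ω := by
  refine ⟨0, Matrix.isHermitian_zero, fun W hW => ?_, ?_, by simp⟩
  · have h0 : ((0 : Matrix (ιA × ιB) (ιA × ιB) ℂ) * W).trace = 0 := by simp
    rw [h0]
    simp only [Complex.zero_re, abs_zero]
    have := psd_norm_le_trace hW.1
    have := norm_nonneg W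
    linarith
  · simp [opNorm_eq_norm]

lemma robSet_le {σ ω : Matrix (ιA × ιB) (ιA × ιB) ℂ}
    (hσ1 : σ.PosSemidef) (hσ2 : (σ.trace) = 1) :
    ∀ t ∈ robSet σ ω, t ≤ 2 * (Fintype.card (ιA × ιB) : ℝ) + 1 := by
  rintro t ⟨X, hX, hW, _, rfl⟩
  have h1 : |((X * σ).trace).re| ≤ ‖X‖ * traceNorm σ := abs_re_trace_mul_le hσ1.1 X
  have h2 : traceNorm σ = 1 := by rw [traceNorm_psd hσ1, hσ2]; simp
  have h3 := feas_norm_le hX hW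
  have h4 := abs_le.mp h1
  have h5 := norm_nonneg X
  rw [h2, mul_one] at h4
  linarith [h4.2]

lemma robSet_bddAbove {σ ω : Matrix (ιA × ιB) (ιA × ιB) ℂ}
    (hσ1 : σ.PosSemidef) (hσ2 : (σ.trace) = 1) : BddAbove (robSet σ ω) :=
  ⟨2 * (Fintype.card (ιA × ιB) : ℝ) + 1, fun t ht => robSet_le hσ1 hσ2 t ht⟩

lemma sSup_robSet_nonneg {σ ω : Matrix (ιA × ιB) (ιA × ιB) ℂ}
    (hσ1 : σ.PosSemidef) (hσ2 : (σ.trace) = 1) : 0 ≤ sSup (robSet σ ω) :=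
  le_csSup (robSet_bddAbove hσ1 hσ2) (zero_mem_robSet σ ω)

lemma sSup_robSet_le {σ ω : Matrix (ιA × ιB) (ιA × ιB) ℂ}
    (hσ1 : σ.PosSemidef) (hσ2 : (σ.trace) = 1) :
    sSup (robSet σ ω) ≤ 2 * (Fintype.card (ιA × ιB) : ℝ) + 1 :=
  csSup_le ⟨0, zero_mem_robSet σ ω⟩ (robSet_le hσ1 hσ2)

/-- Key perturbation inequality at the level of states sharing the tempering operator. -/
lemma sSup_robSet_perturb {ω ω' : Matrix (ιA × ιB) (ιA × ιB) ℂ}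
    (hω1 : ω.PosSemidef) (hω2 : (ω.trace) = 1)
    (hω'1 : ω'.PosSemidef) (hω'2 : (ω'.trace) = 1)
    {δ : ℝ} (hδ : traceNorm (ω - ω') ≤ δ) :
    (1 - δ) * sSup (robSet ω ω) ≤ sSup (robSet ω' ω) := by
  have hkey : ∀ t ∈ robSet ω ω, (1 - δ) * t ≤ sSup (robSet ω' ω) := by
    rintro t ⟨X, hX, hW, hfeas, rfl⟩
    set t := ((X * ω).trace).re
    have ht : t = ‖X‖ := by rw [← hfeas, opNorm_eq_norm]
    have ht0 : 0 ≤ t := ht ▸ norm_nonneg X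
    have hmem : ((X * ω').trace).re ∈ robSet ω' ω := ⟨X, hX, hW, hfeas, rfl⟩
    have hdiff : |((X * (ω - ω')).trace).re| ≤ ‖X‖ * traceNorm (ω - ω') :=
      abs_re_trace_mul_le (psd_sub_herm hω1 hω'1) X
    have hsub : ((X * (ω - ω')).trace).re = t - ((X * ω').trace).re := by
      rw [mul_sub, Matrix.trace_sub, Complex.sub_re]
    rw [hsub] at hdiff
    have hδ0 : 0 ≤ δ := le_trans (by
      have := traceNorm_herm (psd_sub_herm hω1 hω'1)
      have h2 : 0 ≤ traceNorm (ω - ω') := by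
        rw [this]; exact Finset.sum_nonneg fun i _ => abs_nonneg _
      exact h2) hδ
    have h6 : ‖X‖ * traceNorm (ω - ω') ≤ t * δ := by
      rw [← ht]
      exact mul_le_mul_of_nonneg_left hδ (ht ▸ ht0)
    have h7 : (1 - δ) * t ≤ ((X * ω').trace).re := by
      have := (abs_le.mp hdiff).2
      nlinarith
    exact le_trans h7 (le_csSup (robSet_bddAbove hω'1 hω'2) hmem)
  rcases le_or_gt (1 - δ) 0 with h | h
  · have h1 : (1 - δ) * sSup (robSet ω ω) ≤ 0 :=
      mul_nonpos_of_nonpos_of_nonneg h (sSup_robSet_nonneg hω1 hω2)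
    exact le_trans h1 (sSup_robSet_nonneg hω'1 hω'2)
  · have h2 : sSup (robSet ω ω) ≤ sSup (robSet ω' ω) / (1 - δ) := by
      refine csSup_le ⟨0, zero_mem_robSet ω ω⟩ fun t ht => ?_
      rw [le_div_iff₀ h]
      calc t * (1 - δ) = (1 - δ) * t := mul_comm _ _
        _ ≤ _ := hkey t ht
    calc (1 - δ) * sSup (robSet ω ω) ≤ (1 - δ) * (sSup (robSet ω' ω) / (1 - δ)) :=
          mul_le_mul_of_nonneg_left h2 (le_of_lt h)
      _ = sSup (robSet ω' ω) := by field_simp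

end AuxC

section AuxD
open scoped Matrix.Norms.L2Operator
set_option linter.unusedSectionVars false

lemma idTensor_apply {ιA ιB ιR : Type*} (Φ : Matrix ιA ιA ℂ →ₗ[ℂ] Matrix ιB ιB ℂ)
    (M : Matrix (ιR × ιA) (ιR × ιA) ℂ) (p q : ιR × ιB) :
    idTensor ιR Φ M p q = Φ (Matrix.of fun a b => M (p.1, a) (q.1, b)) p.2 q.2 := rfl

lemma idTensor_sub {ιA ιB ιR : Type*} (Φ Ψ : Matrix ιA ιA ℂ →ₗ[ℂ] Matrix ιB ιB ℂ)
    (M : Matrix (ιR × ιA) (ιR × ιA) ℂ) :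
    idTensor ιR (Φ - Ψ) M = idTensor ιR Φ M - idTensor ιR Ψ M := by
  funext p q
  simp only [idTensor_apply, Matrix.sub_apply, LinearMap.sub_apply]

lemma trace_idTensor {ιA ιB ιR : Type*} [Fintype ιA] [Fintype ιB] [Fintype ιR]
    {Φ : Matrix ιA ιA ℂ →ₗ[ℂ] Matrix ιB ιB ℂ} (hΦ : IsTP Φ)
    (M : Matrix (ιR × ιA) (ιR × ιA) ℂ) :
    (idTensor ιR Φ M).trace = M.trace := by
  rw [Matrix.trace, Matrix.trace]
  rw [Fintype.sum_prod_type (f := fun p => (idTensor ιR Φ M).diag p),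
    Fintype.sum_prod_type (f := fun p => M.diag p)]
  refine Finset.sum_congr rfl fun r _ => ?_
  have h1 : ∑ b, (idTensor ιR Φ M).diag (r, b)
      = (Φ (Matrix.of fun a b => M (r, a) (r, b))).trace := by
    rw [Matrix.trace]
    rfl
  rw [h1, hΦ]
  rw [Matrix.trace]
  rfl

lemma isState_idTensor {dA dB : ℕ}
    {Λ : Matrix (Fin dA) (Fin dA) ℂ →ₗ[ℂ] Matrix (Fin dB) (Fin dB) ℂ}
    (hΛ : IsChannel Λ) {ρ : Matrix (Fin dA × Fin dA) (Fin dA × Fin dA) ℂ}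
    (hρ : IsState ρ) : IsState (idTensor (Fin dA) Λ ρ) :=
  ⟨hΛ.1 dA ρ hρ.1, by rw [trace_idTensor hΛ.2, hρ.2]⟩

lemma traceNorm_idTensor_le {dA dB : ℕ}
    (Φ : Matrix (Fin dA) (Fin dA) ℂ →ₗ[ℂ] Matrix (Fin dB) (Fin dB) ℂ)
    {ρ : Matrix (Fin dA × Fin dA) (Fin dA × Fin dA) ℂ} (hρ : IsState ρ) :
    traceNorm (idTensor (Fin dA) Φ ρ)
      ≤ (Fintype.card (Fin dA × Fin dB) : ℝ) *
        ∑ p : Fin dA × Fin dB, ∑ q : Fin dA × Fin dB, ∑ a : Fin dA, ∑ b : Fin dA,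
          ‖Φ (Matrix.single a b 1) p.2 q.2‖ := by
  have hent : ∀ x y, ‖ρ x y‖ ≤ 1 := by
    intro x y
    refine le_trans (entry_abs_le ρ x y) (le_trans (psd_norm_le_trace hρ.1) ?_)
    rw [hρ.2]
    simp
  have hentry : ∀ p q : Fin dA × Fin dB, ‖idTensor (Fin dA) Φ ρ p q‖
      ≤ ∑ a : Fin dA, ∑ b : Fin dA, ‖Φ (Matrix.single a b 1) p.2 q.2‖ := by
    intro p q
    rw [idTensor_apply]
    set N : Matrix (Fin dA) (Fin dA) ℂ := Matrix.of fun a b => ρ (p.1, a) (q.1, b) with hN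
    have hblock : ∀ a b, ‖N a b‖ ≤ 1 := fun a b => hent _ _
    have hdecomp : Φ N = ∑ a : Fin dA, ∑ b : Fin dA, N a b • Φ (Matrix.single a b 1) := by
      conv_lhs => rw [matrix_eq_sum_single N]
      rw [map_sum]
      refine Finset.sum_congr rfl fun a _ => ?_
      rw [map_sum]
      refine Finset.sum_congr rfl fun b _ => ?_
      rw [show Matrix.single a b (N a b) = N a b • Matrix.single a b (1:ℂ) by
        rw [smul_single, smul_eq_mul, mul_one], _root_.map_smul]
    rw [hdecomp]
    simp only [Matrix.sum_apply, Matrix.smul_apply, smul_eq_mul]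
    refine le_trans (norm_sum_le _ _) ?_
    refine le_trans (Finset.sum_le_sum fun a (_ : a ∈ Finset.univ) => norm_sum_le _ _) ?_
    refine Finset.sum_le_sum fun a _ => Finset.sum_le_sum fun b _ => ?_
    rw [norm_mul]
    exact mul_le_of_le_one_left (norm_nonneg _) (hblock a b)
  have hcard : (0:ℝ) ≤ (Fintype.card (Fin dA × Fin dB) : ℝ) := Nat.cast_nonneg _
  calc traceNorm (idTensor (Fin dA) Φ ρ)
      ≤ (Fintype.card (Fin dA × Fin dB) : ℝ) * ‖idTensor (Fin dA) Φ ρ‖ :=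
        traceNorm_le_card_norm _
    _ ≤ (Fintype.card (Fin dA × Fin dB) : ℝ) *
          ∑ p : Fin dA × Fin dB, ∑ q : Fin dA × Fin dB, ‖idTensor (Fin dA) Φ ρ p q‖ :=
        mul_le_mul_of_nonneg_left (norm_le_sum_entries _) hcard
    _ ≤ _ :=
        mul_le_mul_of_nonneg_left
          (Finset.sum_le_sum fun p _ => Finset.sum_le_sum fun q _ => hentry p q) hcard
end AuxD


/-- **Stability of the tempered robustness under diamond-norm perturbations.**
If `Λ, Λ'` are channels with `(1/2)‖Λ − Λ'‖_⋄ ≤ ε`, then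
`1 + 2 R^τ(Λ'|Λ) ≥ (1 − 2ε)(1 + 2 R^τ(Λ))`. -/
theorem chanTemperedRob_diamond_perturbation {dA dB : ℕ}
    (Λ Λ' : Matrix (Fin dA) (Fin dA) ℂ →ₗ[ℂ] Matrix (Fin dB) (Fin dB) ℂ)
    (hΛ : IsChannel Λ) (hΛ' : IsChannel Λ') (ε : ℝ)
    (hε : (1 / 2 : ℝ) * diamondNorm (Λ - Λ') ≤ ε) :
    1 + 2 * chanTemperedRobRel Λ' Λ ≥ (1 - 2 * ε) * (1 + 2 * chanTemperedRobRel Λ Λ) := by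
  classical
  set T : Set ℝ := {t : ℝ | ∃ ρ : Matrix (Fin dA × Fin dA) (Fin dA × Fin dA) ℂ, IsState ρ ∧
    t = temperedRobRel ((idTensor (Fin dA) Λ) ρ) ((idTensor (Fin dA) Λ) ρ)} with hTdef
  set T' : Set ℝ := {t : ℝ | ∃ ρ : Matrix (Fin dA × Fin dA) (Fin dA × Fin dA) ℂ, IsState ρ ∧
    t = temperedRobRel ((idTensor (Fin dA) Λ') ρ) ((idTensor (Fin dA) Λ) ρ)} with hT'def
  have hchan : chanTemperedRobRel Λ Λ = sSup T := rfl
  have hchan' : chanTemperedRobRel Λ' Λ = sSup T' := rfl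
  rcases Nat.eq_zero_or_pos dA with hdA | hdA
  · -- no states exist
    subst hdA
    have hnostate : ∀ ρ : Matrix (Fin 0 × Fin 0) (Fin 0 × Fin 0) ℂ, ¬ IsState ρ := by
      rintro ρ ⟨_, htr⟩
      have h0 : ρ.trace = 0 := by
        rw [Matrix.trace]
        apply Finset.sum_eq_zero
        rintro ⟨⟨a, ha⟩, _⟩ _
        exact absurd ha (Nat.not_lt_zero a)
      rw [h0] at htr
      exact one_ne_zero htr.symm
    have hTe : T = ∅ := by
      rw [Set.eq_empty_iff_forall_notMem]
      rintro t ⟨ρ, hρ, _⟩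
      exact hnostate ρ hρ
    have hT'e : T' = ∅ := by
      rw [Set.eq_empty_iff_forall_notMem]
      rintro t ⟨ρ, hρ, _⟩
      exact hnostate ρ hρ
    have hde : diamondNorm (Λ - Λ') = 0 := by
      unfold diamondNorm
      convert Real.sSup_empty using 2
      rw [Set.eq_empty_iff_forall_notMem]
      rintro t ⟨ρ, hρ, _⟩
      exact hnostate ρ hρ
    rw [hde] at hε
    rw [hchan, hchan', hTe, hT'e, Real.sSup_empty]
    nlinarith
  · -- states exist
    have hcard : (Fintype.card (Fin dA × Fin dA) : ℂ) ≠ 0 := by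
      simp only [Fintype.card_prod, Fintype.card_fin]
      push_cast
      positivity
    set ρ₀ : Matrix (Fin dA × Fin dA) (Fin dA × Fin dA) ℂ :=
      Matrix.diagonal (fun _ => (Fintype.card (Fin dA × Fin dA) : ℂ)⁻¹) with hρ₀def
    have hρ₀ : IsState ρ₀ := by
      constructor
      · refine Matrix.posSemidef_diagonal_iff.mpr fun i => ?_
        have h5 : ((Fintype.card (Fin dA × Fin dA) : ℂ))⁻¹
            = ((((Fintype.card (Fin dA × Fin dA) : ℝ))⁻¹ : ℝ) : ℂ) := by
          rw [Complex.ofReal_inv, Complex.ofReal_natCast]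
        rw [h5, Complex.zero_le_real]
        positivity
      · rw [Matrix.trace_diagonal]
        rw [Finset.sum_const, Finset.card_univ, nsmul_eq_mul]
        field_simp
    -- trace-norm perturbation bound from the diamond norm
    have hdbdd : BddAbove {t : ℝ | ∃ ρ : Matrix (Fin dA × Fin dA) (Fin dA × Fin dA) ℂ,
        IsState ρ ∧ t = traceNorm ((idTensor (Fin dA) (Λ - Λ')) ρ)} := by
      refine ⟨(Fintype.card (Fin dA × Fin dB) : ℝ) *
        ∑ p : Fin dA × Fin dB, ∑ q : Fin dA × Fin dB, ∑ a : Fin dA, ∑ b : Fin dA,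
          ‖(Λ - Λ') (Matrix.single a b 1) p.2 q.2‖, ?_⟩
      rintro t ⟨ρ, hρ, rfl⟩
      exact traceNorm_idTensor_le (Λ - Λ') hρ
    have htn : ∀ ρ : Matrix (Fin dA × Fin dA) (Fin dA × Fin dA) ℂ, IsState ρ →
        traceNorm ((idTensor (Fin dA) Λ) ρ - (idTensor (Fin dA) Λ') ρ) ≤ 2 * ε := by
      intro ρ hρ
      have hmem : traceNorm ((idTensor (Fin dA) (Λ - Λ')) ρ) ∈ {t : ℝ | ∃ ρ, IsState ρ ∧
          t = traceNorm ((idTensor (Fin dA) (Λ - Λ')) ρ)} := ⟨ρ, hρ, rfl⟩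
      have h1 : traceNorm ((idTensor (Fin dA) (Λ - Λ')) ρ) ≤ diamondNorm (Λ - Λ') :=
        le_csSup hdbdd hmem
      rw [idTensor_sub] at h1
      linarith
    -- per-state inequality
    have hkey : ∀ t ∈ T, (1 - 2 * ε) * (1 + 2 * t) ≤ 1 + 2 * sSup T' := by
      rintro t ⟨ρ, hρ, rfl⟩
      have hω := isState_idTensor hΛ hρ
      have hω' := isState_idTensor hΛ' hρ
      have hper := sSup_robSet_perturb hω.1 hω.2 hω'.1 hω'.2 (htn ρ hρ)
      have hmem' : temperedRobRel ((idTensor (Fin dA) Λ') ρ) ((idTensor (Fin dA) Λ) ρ) ∈ T' :=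
        ⟨ρ, hρ, rfl⟩
      have hT'bdd : BddAbove T' := by
        refine ⟨(2 * (Fintype.card (Fin dA × Fin dB) : ℝ) + 1 - 1) / 2, ?_⟩
        rintro s ⟨σ, hσ, rfl⟩
        have hσ' := isState_idTensor hΛ' hσ
        rw [temperedRobRel_eq]
        have := sSup_robSet_le (ω := (idTensor (Fin dA) Λ) σ) hσ'.1 hσ'.2
        linarith
      have hle : temperedRobRel ((idTensor (Fin dA) Λ') ρ) ((idTensor (Fin dA) Λ) ρ)
          ≤ sSup T' := le_csSup hT'bdd hmem'
      rw [temperedRobRel_eq] at hle ⊢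
      have e1 : 1 + 2 * ((sSup (robSet ((idTensor (Fin dA) Λ) ρ) ((idTensor (Fin dA) Λ) ρ)) - 1) / 2)
          = sSup (robSet ((idTensor (Fin dA) Λ) ρ) ((idTensor (Fin dA) Λ) ρ)) := by ring
      rw [e1]
      have e2 : sSup (robSet ((idTensor (Fin dA) Λ') ρ) ((idTensor (Fin dA) Λ) ρ))
          ≤ 1 + 2 * sSup T' := by linarith
      linarith [hper]
    have hTne : T.Nonempty := ⟨_, ρ₀, hρ₀, rfl⟩
    have hT'ne : T'.Nonempty := ⟨_, ρ₀, hρ₀, rfl⟩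
    have hT'bdd : BddAbove T' := by
      refine ⟨(2 * (Fintype.card (Fin dA × Fin dB) : ℝ) + 1 - 1) / 2, ?_⟩
      rintro s ⟨σ, hσ, rfl⟩
      have hσ' := isState_idTensor hΛ' hσ
      rw [temperedRobRel_eq]
      have := sSup_robSet_le (ω := (idTensor (Fin dA) Λ) σ) hσ'.1 hσ'.2
      linarith
    have hTbdd : BddAbove T := by
      refine ⟨(2 * (Fintype.card (Fin dA × Fin dB) : ℝ) + 1 - 1) / 2, ?_⟩
      rintro s ⟨σ, hσ, rfl⟩
      have hσ' := isState_idTensor hΛ hσ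
      rw [temperedRobRel_eq]
      have := sSup_robSet_le (ω := (idTensor (Fin dA) Λ) σ) hσ'.1 hσ'.2
      linarith
    -- lower bounds on the suprema
    have hlowT : -(1/2 : ℝ) ≤ sSup T := by
      have hω := isState_idTensor hΛ hρ₀
      have hmem : temperedRobRel ((idTensor (Fin dA) Λ) ρ₀) ((idTensor (Fin dA) Λ) ρ₀) ∈ T :=
        ⟨ρ₀, hρ₀, rfl⟩
      have h1 := le_csSup hTbdd hmem
      rw [temperedRobRel_eq] at h1
      have h2 := sSup_robSet_nonneg (ω := (idTensor (Fin dA) Λ) ρ₀) hω.1 hω.2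
      linarith
    have hlowT' : -(1/2 : ℝ) ≤ sSup T' := by
      have hω' := isState_idTensor hΛ' hρ₀
      have hmem : temperedRobRel ((idTensor (Fin dA) Λ') ρ₀) ((idTensor (Fin dA) Λ) ρ₀) ∈ T' :=
        ⟨ρ₀, hρ₀, rfl⟩
      have h1 := le_csSup hT'bdd hmem
      rw [temperedRobRel_eq] at h1
      have h2 := sSup_robSet_nonneg (ω := (idTensor (Fin dA) Λ) ρ₀) hω'.1 hω'.2
      linarith
    rw [hchan, hchan', ge_iff_le]
    rcases le_or_gt (1 - 2 * ε) 0 with h | h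
    · have h1 : (1 - 2 * ε) * (1 + 2 * sSup T) ≤ 0 := by nlinarith
      linarith
    · have h2 : sSup T ≤ ((1 + 2 * sSup T') / (1 - 2 * ε) - 1) / 2 := by
        refine csSup_le hTne fun t ht => ?_
        have h3 := hkey t ht
        have h4 : 1 + 2 * t ≤ (1 + 2 * sSup T') / (1 - 2 * ε) := by
          rw [le_div_iff₀ h]
          nlinarith [h3]
        linarith
      have h4 : (1 - 2 * ε) * (1 + 2 * sSup T)
          ≤ (1 - 2 * ε) * ((1 + 2 * sSup T') / (1 - 2 * ε)) := by
        apply mul_le_mul_of_nonneg_left _ (le_of_lt h)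
        linarith
      calc (1 - 2 * ε) * (1 + 2 * sSup T)
          ≤ (1 - 2 * ε) * ((1 + 2 * sSup T') / (1 - 2 * ε)) := h4
        _ = 1 + 2 * sSup T' := by field_simp
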